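/- arXiv:2102.04261 — 3 statements merged into one kernel-verified Lean document; each statement's English description precedes it below -/
import Mathlib

section
/- For the split quadratic étale extension K × K of a field K, the multiplicative transfer of a pair of quadratic forms (q₁, q₂) of the same dimension over K equals the tensor product q₁ ⊗ q₂. -/
open TensorProduct

/-- For the split quadratic étale extension `K × K` of `K`, a quadratic form over `K × K` is a
pair `(q₁, q₂)` of quadratic forms over `K` of the same dimension, with conjugate form the
swapped pair; the switch-fixed subspace of `ᶦV ⊗ V = (V₂ ⊗ V₁) × (V₁ ⊗ V₂)` is the graph of
the commutor `V₂ ⊗ V₁ ≃ V₁ ⊗ V₂`, and the multiplicative transfer `N_{K×K/K}(q₁, q₂)` is the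
restriction of `ᶦq ⊗ q` (computed via its first component `q₂ ⊗ q₁`) to this subspace.
The statement: this multiplicative transfer is isometric to `q₁ ⊗ q₂`. -/
theorem statement1 {K V₁ V₂ : Type*} [Field K] [Invertible (2 : K)]
    [AddCommGroup V₁] [AddCommGroup V₂] [Module K V₁] [Module K V₂]
    [FiniteDimensional K V₁] [FiniteDimensional K V₂]
    (hdim : Module.finrank K V₁ = Module.finrank K V₂)
    (q₁ : QuadraticForm K V₁) (q₂ : QuadraticForm K V₂) :
    QuadraticMap.Equivalent
      ((q₂.tmul q₁).comp
        ((LinearMap.fst K (V₂ ⊗[K] V₁) (V₁ ⊗[K] V₂)).comp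
          (LinearMap.graph (TensorProduct.comm K V₂ V₁).toLinearMap).subtype))
      (q₁.tmul q₂) := by
  set f := (TensorProduct.comm K V₂ V₁).toLinearMap with hf
  let e : LinearMap.graph f ≃ₗ[K] V₂ ⊗[K] V₁ :=
    { toFun := fun x => x.1.1
      map_add' := fun _ _ => rfl
      map_smul' := fun _ _ => rfl
      invFun := fun z => ⟨(z, f z), by simp [LinearMap.mem_graph_iff]⟩
      left_inv := fun x =>
        Subtype.ext (Prod.ext rfl ((LinearMap.mem_graph_iff f x.1).1 x.2).symm)
      right_inv := fun z => rfl }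
  exact ⟨{ toLinearEquiv := e.trans (TensorProduct.comm K V₂ V₁)
           map_app' := fun x =>
             QuadraticForm.tmul_tensorComm_apply q₂ q₁ x.1.1 }⟩
end

section
/- Let C be an octonion algebra over a field K of characteristic not 2, with norm n and canonical involution. For a, b ∈ C, the endomorphism R_{āb - b̄a} + L_b L_ā - L_a L_b̄ of C equals the map x ↦ 2n(x,a)b - 2n(x,b)a. -/
/-- Let `C` be an octonion algebra over a field `K` of characteristic not 2, with
multiplicative nondegenerate norm `n` and canonical involution `x̄ = n(x,1)·1 - x`.
For `a, b ∈ C`, the endomorphism `R_{āb - b̄a} + L_b L_ā - L_a L_b̄` of `C` equals the map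
`x ↦ 2n(x,a)b - 2n(x,b)a`, where `n(x,y)` denotes the polar form. -/
theorem statement3 {K C : Type*} [Field K] (hchar : (2 : K) ≠ 0)
    [NonAssocRing C] [Module K C] [SMulCommClass K C C] [IsScalarTower K C C]
    (hdim : Module.finrank K C = 8)
    (n : QuadraticForm K C)
    (hmul : ∀ x y : C, n (x * y) = n x * n y)
    (hone : n 1 = 1)
    (hnd : (QuadraticMap.polarBilin n).Nondegenerate)
    (conj : C → C)
    (hconj : ∀ x : C, conj x = QuadraticMap.polar n x 1 • (1 : C) - x) :
    ∀ a b x : C,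
      x * (conj a * b - conj b * a) + b * (conj a * x) - a * (conj b * x)
        = (2 * QuadraticMap.polar n x a) • b - (2 * QuadraticMap.polar n x b) • a := by
  set p : C → C → K := fun u v => QuadraticMap.polar n u v with hp
  -- polarization of multiplicativity in the left argument
  have hL1 : ∀ x y z : C, p (x * z) (y * z) = p x y * n z := by
    intro x y z
    simp only [hp, QuadraticMap.polar, ← add_mul, hmul]
    ring
  -- full linearization of multiplicativity
  have hL3 : ∀ x y z w : C,
      p (x * z) (y * w) + p (x * w) (y * z) = p x y * p z w := by
    intro x y z w
    have h := hL1 x y (z + w)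
    rw [mul_add, mul_add, show p ((x*z + x*w)) (y*z + y*w)
          = p (x*z) (y*z) + p (x*z) (y*w) + p (x*w) (y*z) + p (x*w) (y*w) by
        simp only [hp, QuadraticMap.polar_add_left, QuadraticMap.polar_add_right]; ring,
      hL1 x y z, hL1 x y w] at h
    have h2 : n (z + w) = n z + n w + p z w := by
      simp only [hp, QuadraticMap.polar]; ring
    rw [h2] at h
    linear_combination h
  have hp11 : p 1 1 = 2 := by
    simp only [hp, QuadraticMap.polar_self, hone, smul_eq_mul]
    norm_num
  have hcomm : ∀ u v : C, p u v = p v u := fun u v => QuadraticMap.polar_comm n u v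
  -- polar form expressions with conj
  have hpsub : ∀ u v w : C, p (u - v) w = p u w - p v w :=
    fun u v w => QuadraticMap.polar_sub_left n u v w
  have hpsmul : ∀ (c : K) (u v : C), p (c • u) v = c * p u v := by
    intro c u v
    simp only [hp, QuadraticMap.polar_smul_left, smul_eq_mul]
  -- n(ū v, w) = n(v, u w)
  have hL7 : ∀ u v w : C, p (conj u * v) w = p v (u * w) := by
    intro u v w
    rw [hconj u, sub_mul, smul_mul_assoc, one_mul, hpsub, hpsmul]
    have h3 := hL3 1 u v w
    rw [one_mul, one_mul] at h3
    linear_combination -h3 + hcomm u 1 * p v w + hcomm w (u * v)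
  -- conj is an involution
  have hcc : ∀ u : C, conj (conj u) = u := by
    intro u
    have h1 : p (conj u) 1 = p u 1 := by
      rw [hconj u, hpsub, hpsmul, hp11]; ring
    have h1' : QuadraticMap.polar n (conj u) 1 = QuadraticMap.polar n u 1 := h1
    rw [hconj (conj u), h1', hconj u]
    abel
  -- n(x m, y) = n(m, x̄ y)
  have hL7' : ∀ u v w : C, p (u * v) w = p v (conj u * w) := by
    intro u v w
    have := hL7 (conj u) v w
    rwa [hcc u] at this
  -- conj u * v + conj v * u = n(u,v) • 1
  have hL8 : ∀ u v : C, conj u * v + conj v * u = p u v • (1 : C) := by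
    intro u v
    rw [← sub_eq_zero]
    apply hnd.1
    intro w
    rw [QuadraticMap.polarBilin_apply_apply]
    have hexp : QuadraticMap.polar n (conj u * v + conj v * u - p u v • 1) w
        = p (conj u * v) w + p (conj v * u) w - p u v * p 1 w := by
      simp only [hp, QuadraticMap.polar_sub_left, QuadraticMap.polar_add_left,
        QuadraticMap.polar_smul_left, smul_eq_mul]
    rw [hexp, hL7 u v w, hL7 v u w]
    have h3 := hL3 u v 1 w
    rw [mul_one, mul_one] at h3
    linear_combination h3 - hcomm (u * w) v
  -- n(conj u, conj v) = n(u, v)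
  have hL6 : ∀ u v : C, p (conj u) (conj v) = p u v := by
    intro u v
    rw [hconj u, hconj v]
    simp only [hp, QuadraticMap.polar_sub_left, QuadraticMap.polar_sub_right,
      QuadraticMap.polar_smul_left, QuadraticMap.polar_smul_right, smul_eq_mul]
    have := hp11
    simp only [hp] at this
    rw [this]
    linear_combination (QuadraticMap.polar n v 1) * QuadraticMap.polar_comm n u 1
      + QuadraticMap.polar n 1 u * QuadraticMap.polar_comm n v 1
      - QuadraticMap.polar n 1 v * QuadraticMap.polar_comm n u 1
  -- main computation
  intro a b x
  rw [← sub_eq_zero]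
  apply hnd.1
  intro y
  rw [QuadraticMap.polarBilin_apply_apply]
  have hexp : QuadraticMap.polar n
      (x * (conj a * b - conj b * a) + b * (conj a * x) - a * (conj b * x)
        - ((2 * QuadraticMap.polar n x a) • b - (2 * QuadraticMap.polar n x b) • a)) y
      = p (x * (conj a * b)) y - p (x * (conj b * a)) y + p (b * (conj a * x)) y
        - p (a * (conj b * x)) y - (2 * p x a * p b y - 2 * p x b * p a y) := by
    rw [mul_sub]
    simp only [hp, QuadraticMap.polar_sub_left, QuadraticMap.polar_add_left,
      QuadraticMap.polar_smul_left, smul_eq_mul]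
  rw [hexp]
  have e1 := hL7' x (conj a * b) y
  have e2 := hL7' x (conj b * a) y
  have e3 := hL7' b (conj a * x) y
  have e4 := hL7' a (conj b * x) y
  have f1 := hL3 (conj a) (conj x) b y
  rw [hL6 a x] at f1
  have f2 := hL3 (conj b) (conj x) a y
  rw [hL6 b x] at f2
  have f3 := hL3 (conj a) (conj b) x y
  rw [hL6 a b] at f3
  have f4 := hL3 (conj b) (conj a) x y
  rw [hL6 b a] at f4
  -- n(ā y, x̄ b) + n(ā y, b̄ x) = n(x,b) n(a,y)
  have h5 : p (conj a * y) (conj x * b) + p (conj a * y) (conj b * x)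
       = p x b * p a y := by
    have hadd : p (conj a * y) (conj x * b) + p (conj a * y) (conj b * x)
        = p (conj a * y) (conj x * b + conj b * x) := by
      simp only [hp, QuadraticMap.polar_add_right]
    rw [hadd, hL8 x b]
    have : p (conj a * y) (p x b • (1:C)) = p x b * p (conj a * y) 1 := by
      simp only [hp, QuadraticMap.polar_smul_right, smul_eq_mul]
    rw [this, hL7 a y 1, mul_one, hcomm y a]
  have h6 : p (conj b * y) (conj x * a) + p (conj b * y) (conj a * x)
       = p x a * p b y := by
    have hadd : p (conj b * y) (conj x * a) + p (conj b * y) (conj a * x)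
        = p (conj b * y) (conj x * a + conj a * x) := by
      simp only [hp, QuadraticMap.polar_add_right]
    rw [hadd, hL8 x a]
    have : p (conj b * y) (p x a • (1:C)) = p x a * p (conj b * y) 1 := by
      simp only [hp, QuadraticMap.polar_smul_right, smul_eq_mul]
    rw [this, hL7 b y 1, mul_one, hcomm y b]
  linear_combination e1 - e2 + e3 - e4 + f1 - f2 + f3 - f4 - h5 + h6
    + hcomm a x * p b y - hcomm b x * p a y - hcomm b a * p x y
    - hcomm (conj a * y) (conj b * x) + hcomm (conj b * y) (conj a * x)
    + hcomm (conj a * x) (conj b * y) + hcomm (conj a * y) (conj b * x)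
end

section
/- For a nondegenerate quadratic form q over a field K of characteristic not 2, and u, v, u', v' in the underlying vector space, the commutator identity [[u,v], [u',v']] = -2q(u,u')[v,v'] + 2q(u,v')[v,u'] + 2q(v,u')[u,v'] - 2q(v,v')[u,u'] holds in the Clifford algebra C(q), where [x,y] = xy - yx and q(x,y) denotes the polar form. -/
open CliffordAlgebra QuadraticMap in
lemma aux1 {K V : Type*} [Field K] [AddCommGroup V] [Module K V]
    (Q : QuadraticForm K V) (x c d : V) :
    ι Q x * (ι Q c * ι Q d) - (ι Q c * ι Q d) * ι Q x
      = polar Q x c • ι Q d - polar Q x d • ι Q c := by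
  rw [← mul_assoc, ι_mul_ι_comm (Q := Q) x c, sub_mul, mul_assoc,
    ι_mul_ι_comm (Q := Q) x d, Algebra.smul_def, Algebra.smul_def, mul_sub, ← Algebra.commutes]
  noncomm_ring

/-- In the Clifford algebra of a nondegenerate quadratic space `(V, Q)` over a field of
characteristic not 2, for `u, v, u', v' ∈ V` the commutator identity
`[[u,v],[u',v']] = -2Q(u,u')[v,v'] + 2Q(u,v')[v,u'] + 2Q(v,u')[u,v'] - 2Q(v,v')[u,u']`
holds, where `[x,y] = xy - yx` and `Q(x,y)` is the polar form of `Q`. -/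
theorem statement4 {K V : Type*} [Field K] (hchar : (2 : K) ≠ 0)
    [AddCommGroup V] [Module K V]
    (Q : QuadraticForm K V)
    (hnd : (QuadraticMap.polarBilin Q).Nondegenerate)
    (u v u' v' : V) :
    letI ι := (CliffordAlgebra.ι Q)
    letI c : CliffordAlgebra Q → CliffordAlgebra Q → CliffordAlgebra Q :=
      fun x y => x * y - y * x
    c (c (ι u) (ι v)) (c (ι u') (ι v'))
      = (-(2 * QuadraticMap.polar Q u u')) • c (ι v) (ι v')
        + (2 * QuadraticMap.polar Q u v') • c (ι v) (ι u')
        + (2 * QuadraticMap.polar Q v u') • c (ι u) (ι v')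
        + (-(2 * QuadraticMap.polar Q v v')) • c (ι u) (ι u') := by
  set ι := CliffordAlgebra.ι Q
  set a := ι u; set b := ι v; set a' := ι u'; set b' := ι v'
  set X := a' * b' - b' * a' with hX
  set E := (QuadraticMap.polar Q v u' • b' - QuadraticMap.polar Q v v' • a')
      - (QuadraticMap.polar Q v v' • a' - QuadraticMap.polar Q v u' • b') with hEdef
  set E' := (QuadraticMap.polar Q u u' • b' - QuadraticMap.polar Q u v' • a')
      - (QuadraticMap.polar Q u v' • a' - QuadraticMap.polar Q u u' • b') with hE'def
  have hE : b * X - X * b = E := by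
    calc b * X - X * b
        = (b * (a' * b') - (a' * b') * b) - (b * (b' * a') - (b' * a') * b) := by
          rw [hX]; noncomm_ring
      _ = E := by rw [aux1 Q v u' v', aux1 Q v v' u']
  have hE' : a * X - X * a = E' := by
    calc a * X - X * a
        = (a * (a' * b') - (a' * b') * a) - (a * (b' * a') - (b' * a') * a) := by
          rw [hX]; noncomm_ring
      _ = E' := by rw [aux1 Q u u' v', aux1 Q u v' u']
  have key : (a * b - b * a) * X - X * (a * b - b * a)
      = a * E - E * a + E' * b - b * E' := by
    rw [← hE, ← hE']; noncomm_ring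
  show (a * b - b * a) * X - X * (a * b - b * a) = _
  rw [key, hEdef, hE'def]
  simp only [mul_sub, sub_mul, mul_smul_comm, smul_mul_assoc, smul_sub]
  module
end
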